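/- If the theory of constraints CT is closed under negation and closed under existential quantification, then for all finite sets C, D ⊆ 𝒞 of constraints such that C ∪ D is consistent, there exist finite sets E₁,…,E_r of constraints such that {E₁,…,E_r} is a constraint split of C and D, i.e. cs(C,D) = {E₁,…,E_r} exists. -/

import Mathlib

namespace CABAFormal

/-- First-order terms over function symbols `F`; variables are natural numbers. -/
inductive Term (F : Type) : Type
  | var : ℕ → Term F
  | app : F → List (Term F) → Term F

namespace Term

variable {F D : Type}

mutual
  /-- Variables occurring in a term. -/
  def varsT : Term F → Set ℕ
    | .var n => {n}
    | .app _ args => varsL args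
  /-- Variables occurring in a list of terms. -/
  def varsL : List (Term F) → Set ℕ
    | [] => ∅
    | t :: ts => varsT t ∪ varsL ts
end

mutual
  /-- Application of a substitution to a term. -/
  def substT (σ : ℕ → Term F) : Term F → Term F
    | .var n => σ n
    | .app f args => .app f (substL σ args)
  def substL (σ : ℕ → Term F) : List (Term F) → List (Term F)
    | [] => []
    | t :: ts => substT σ t :: substL σ ts
end

mutual
  /-- Evaluation of a term in a structure with domain `D`. -/
  def evalT (funI : F → List D → D) (σ : ℕ → D) : Term F → D
    | .var n => σ n
    | .app f args => funI f (evalL funI σ args)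
  def evalL (funI : F → List D → D) (σ : ℕ → D) : List (Term F) → List D
    | [] => []
    | t :: ts => evalT funI σ t :: evalL funI σ ts
end

end Term

/-- Atomic formulas: a predicate symbol applied to a list of terms. -/
structure Atom (F P : Type) : Type where
  pred : P
  args : List (Term F)

namespace Atom
variable {F P : Type}
def vars (a : Atom F P) : Set ℕ := Term.varsL a.args
def subst (σ : ℕ → Term F) (a : Atom F P) : Atom F P := ⟨a.pred, Term.substL σ a.args⟩
def Ground (a : Atom F P) : Prop := a.vars = ∅
end Atom

/-- An inference rule with an atomic head and a list of atomic body sentences. -/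
structure Rule (F P : Type) : Type where
  head : Atom F P
  body : List (Atom F P)

namespace Rule
variable {F P : Type}
def subst (σ : ℕ → Term F) (r : Rule F P) : Rule F P := ⟨r.head.subst σ, r.body.map (Atom.subst σ)⟩
def vars (r : Rule F P) : Set ℕ := r.head.vars ∪ ⋃ b ∈ r.body, Atom.vars b
end Rule

def setVars {F P : Type} (S : Set (Atom F P)) : Set ℕ := ⋃ a ∈ S, a.vars

def substSet {F P : Type} (σ : ℕ → Term F) (S : Set (Atom F P)) : Set (Atom F P) :=
  Atom.subst σ '' S

/-- A variable renaming: a substitution given by a (finite-support) permutation of variables. -/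
def IsRenaming {F : Type} (ρ : ℕ → Term F) : Prop :=
  ∃ π : Equiv.Perm ℕ, {n | π n ≠ n}.Finite ∧ ρ = fun n => Term.var (π n)

/-- The substitution `{X/t}` sending the variables `xs` to the terms `ts` (componentwise). -/
def mkSubst {F : Type} (xs : List ℕ) (ts : List (Term F)) : ℕ → Term F :=
  fun n => ((xs.zip ts).lookup n).getD (Term.var n)

/-- Two assignments agree on a set of variables. -/
def Agree {D : Type} (σ σ' : ℕ → D) (V : Set ℕ) : Prop := ∀ x ∈ V, σ x = σ' x

/-- A set of atoms is predicate closed if together with `p(t)` it contains `p(t')`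
for every tuple `t'` of terms of the same length. -/
def PredClosed {F P : Type} (L : Set (Atom F P)) : Prop :=
  ∀ (p : P) (ts ts' : List (Term F)), Atom.mk p ts ∈ L → ts'.length = ts.length →
    Atom.mk p ts' ∈ L

/-- A (flat) Constrained Assumption-Based Argumentation framework, together with the
semantics of its theory of constraints (an algebraic structure with domain `D`,
in which a designated predicate `eqP` is interpreted as identity, as required by
the Clark Equality Theory). -/
structure CABA (F P D : Type) : Type where
  /-- the atomic language `L_c` -/
  Lc : Set (Atom F P)
  /-- the atomic constraints `𝒞 ⊆ L_c` -/
  Con : Set (Atom F P)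
  /-- the inference rules `ℛ` -/
  Rules : Set (Rule F P)
  /-- the assumptions `𝒜` -/
  Asm : Set (Atom F P)
  /-- the contrary predicate map: the contrary of `p(t)` is `contrPred p (t)` -/
  contrPred : P → P
  /-- interpretation of function symbols in the structure underlying `CT` -/
  funI : F → List D → D
  /-- interpretation of predicate symbols in the structure underlying `CT` -/
  predI : P → List D → Prop
  /-- the equality predicate of `CT` -/
  eqP : P
  dom_nonempty : Nonempty D
  ground_term : ∃ t : Term F, Term.varsT t = ∅
  con_sub : Con ⊆ Lc
  lc_closed : PredClosed Lc
  con_closed : PredClosed Con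
  asm_closed : PredClosed Asm
  rules_lang : ∀ r ∈ Rules, (r.head ∈ Lc ∧ r.head ∉ Con) ∧ ∀ b ∈ r.body, b ∈ Lc
  /-- rules are in normalised form: heads are predicates applied to distinct variables -/
  rules_norm : ∀ r ∈ Rules, ∃ xs : List ℕ, xs.Nodup ∧ r.head.args = xs.map Term.var
  asm_sub : ∀ a ∈ Asm, a ∈ Lc ∧ a ∉ Con
  asm_nonempty : Asm.Nonempty
  contr_wf : ∀ a ∈ Asm, Atom.mk (contrPred a.pred) a.args ∈ Lc ∧
    Atom.mk (contrPred a.pred) a.args ∉ Con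
  /-- flatness: assumptions are not heads of rules -/
  flat : ∀ r ∈ Rules, r.head ∉ Asm
  eq_con : ∀ t u : Term F, Atom.mk eqP [t, u] ∈ Con
  eq_interp : ∀ a b : D, predI eqP [a, b] ↔ a = b

namespace CABA

variable {F P D : Type}

/-- The contrary of an assumption. -/
def contrary (fc : CABA F P D) (a : Atom F P) : Atom F P := ⟨fc.contrPred a.pred, a.args⟩

/-- Truth of an atom under a variable assignment, in the structure underlying `CT`. -/
def Holds (fc : CABA F P D) (σ : ℕ → D) (a : Atom F P) : Prop :=
  fc.predI a.pred (Term.evalL fc.funI σ a.args)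

/-- `CT ⊨ a` for an atom `a` (validity of its universal closure). -/
def Valid (fc : CABA F P D) (a : Atom F P) : Prop := ∀ σ : ℕ → D, fc.Holds σ a

/-- A set `C` of constraints is consistent: `CT ⊨ ∃(⋀C)`. -/
def ConsistentSet (fc : CABA F P D) (C : Set (Atom F P)) : Prop :=
  ∃ σ : ℕ → D, ∀ c ∈ C, fc.Holds σ c

/-- `CT ⊨ t = u` (for ground terms this is independent of the assignment). -/
def termEq (fc : CABA F P D) (t u : Term F) : Prop :=
  ∀ σ : ℕ → D, Term.evalT fc.funI σ t = Term.evalT fc.funI σ u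

/-- `CT ⊨ p(t) ↔ p(t')`, i.e. same predicate and `CT ⊨ t = t'` componentwise. -/
def atomEq (fc : CABA F P D) (a b : Atom F P) : Prop :=
  a.pred = b.pred ∧ List.Forall₂ fc.termEq a.args b.args

/-- `CT ⊨ ⋀A ↔ ⋀A'` for sets of ground atoms: each atom of each set is `CT`-equivalent
to an atom of the other set. -/
def asmSetEq (fc : CABA F P D) (A B : Set (Atom F P)) : Prop :=
  (∀ a ∈ A, ∃ b ∈ B, fc.atomEq a b) ∧ (∀ b ∈ B, ∃ a ∈ A, fc.atomEq a b)

end CABA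

/-- `TightFor fc C A R s` holds iff there is a tight constrained argument (a finite tree)
for claim `s`, supported exactly by the constraints `C`, assumptions `A` and rules `R`:
every non-leaf node `p(t)` has as children the instantiated body atoms of exactly one
renamed-apart (normalised) rule of `R` with head `p(X)` and `ϑ = {X/t}`, and every leaf
is a constraint in `C`, an assumption in `A`, or `true`. -/
inductive TightFor {F P D : Type} (fc : CABA F P D) :
    Set (Atom F P) → Set (Atom F P) → Set (Rule F P) → Atom F P → Prop
  | asm {a : Atom F P} (ha : a ∈ fc.Asm) : TightFor fc ∅ {a} ∅ a
  | node {p : P} {ts : List (Term F)} {r rv : Rule F P} {xs : List ℕ}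
      {CS AS : ℕ → Set (Atom F P)} {RS : ℕ → Set (Rule F P)}
      (hr : r ∈ fc.Rules)
      (hvar : ∃ ρ : ℕ → Term F, IsRenaming ρ ∧ rv = r.subst ρ)
      (hhead : rv.head = ⟨p, xs.map Term.var⟩)
      (hnodup : xs.Nodup)
      (hlen : xs.length = ts.length)
      (hfresh : (Rule.vars rv \ {n | n ∈ xs}) ∩ Term.varsL ts = ∅)
      (hcon : ∀ i (hi : i < rv.body.length),
        (rv.body.get ⟨i, hi⟩).subst (mkSubst xs ts) ∈ fc.Con →
          CS i = {(rv.body.get ⟨i, hi⟩).subst (mkSubst xs ts)} ∧ AS i = ∅ ∧ RS i = ∅)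
      (hasm : ∀ i (hi : i < rv.body.length),
        (rv.body.get ⟨i, hi⟩).subst (mkSubst xs ts) ∉ fc.Con →
        (rv.body.get ⟨i, hi⟩).subst (mkSubst xs ts) ∈ fc.Asm →
          CS i = ∅ ∧ AS i = {(rv.body.get ⟨i, hi⟩).subst (mkSubst xs ts)} ∧ RS i = ∅)
      (hder : ∀ i (hi : i < rv.body.length),
        (rv.body.get ⟨i, hi⟩).subst (mkSubst xs ts) ∉ fc.Con →
        (rv.body.get ⟨i, hi⟩).subst (mkSubst xs ts) ∉ fc.Asm →
          TightFor fc (CS i) (AS i) (RS i) ((rv.body.get ⟨i, hi⟩).subst (mkSubst xs ts)))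
      (hsep : ∀ i j (hi : i < rv.body.length) (hj : j < rv.body.length), i ≠ j →
        (setVars (CS i ∪ AS i) ∩ setVars (CS j ∪ AS j)) ⊆
          Atom.vars ((rv.body.get ⟨i, hi⟩).subst (mkSubst xs ts)) ∩
            Atom.vars ((rv.body.get ⟨j, hj⟩).subst (mkSubst xs ts)))
      (hsep' : ∀ i (hi : i < rv.body.length),
        setVars (CS i ∪ AS i) ∩ (Term.varsL ts ∪ Rule.vars rv) ⊆
          Atom.vars ((rv.body.get ⟨i, hi⟩).subst (mkSubst xs ts))) :
      TightFor fc (⋃ i ∈ Finset.range rv.body.length, CS i)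
        (⋃ i ∈ Finset.range rv.body.length, AS i)
        ({r} ∪ ⋃ i ∈ Finset.range rv.body.length, RS i)
        ⟨p, ts⟩

/-- A constrained argument `C ∪ A ⊢_R s`, represented by its support and claim. -/
structure CArgument (F P : Type) : Type where
  con : Set (Atom F P)
  asm : Set (Atom F P)
  rules : Set (Rule F P)
  claim : Atom F P

namespace CArgument
variable {F P : Type}
def vars (α : CArgument F P) : Set ℕ := setVars α.con ∪ setVars α.asm ∪ α.claim.vars
def Ground (α : CArgument F P) : Prop := α.vars = ∅
def subst (σ : ℕ → Term F) (α : CArgument F P) : CArgument F P :=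
  ⟨substSet σ α.con, substSet σ α.asm, α.rules, α.claim.subst σ⟩
end CArgument

section Args

variable {F P D : Type}

/-- A tight constrained argument (with consistent constraint set). -/
def IsTightArg (fc : CABA F P D) (α : CArgument F P) : Prop :=
  TightFor fc α.con α.asm α.rules α.claim ∧ fc.ConsistentSet α.con

/-- The set `TCArg` of all tight constrained arguments. -/
def TCArg (fc : CABA F P D) : Set (CArgument F P) := {α | IsTightArg fc α}

/-- Most general: the claim is of the form `p(X)` for a tuple of distinct variables. -/
def IsMostGeneral (α : CArgument F P) : Prop :=
  ∃ xs : List ℕ, xs.Nodup ∧ α.claim.args = xs.map Term.var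

/-- The set `MGCArg` of all most general constrained arguments. -/
def MGCArg (fc : CABA F P D) : Set (CArgument F P) := {α | IsTightArg fc α ∧ IsMostGeneral α}

/-- `α'` is a constrained instance (via `ϑ` and `D`) of `α`. -/
def ConstrainedInstanceOf (fc : CABA F P D) (α' α : CArgument F P) : Prop :=
  ∃ (ϑ : ℕ → Term F) (Dc : Set (Atom F P)), Dc ⊆ fc.Con ∧
    α'.con = substSet ϑ α.con ∪ Dc ∧ α'.asm = substSet ϑ α.asm ∧
    α'.rules = α.rules ∧ α'.claim = α.claim.subst ϑ ∧ fc.ConsistentSet α'.con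

/-- The set `CArg` of all constrained arguments. -/
def CArg (fc : CABA F P D) : Set (CArgument F P) :=
  {α | ∃ β ∈ TCArg fc, ConstrainedInstanceOf fc α β}

/-- `GrCInst α`: the ground constrained instances of `α`. -/
def GrCInst (fc : CABA F P D) (α : CArgument F P) : Set (CArgument F P) :=
  {α' | ConstrainedInstanceOf fc α' α ∧ α'.Ground}

/-- `GrCInst Γ` for a set `Γ` of constrained arguments. -/
def GrCInstSet (fc : CABA F P D) (Γ : Set (CArgument F P)) : Set (CArgument F P) :=
  ⋃ α ∈ Γ, GrCInst fc α

/-- Equality of ground constrained arguments modulo ground constraints. -/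
def EqModGC (fc : CABA F P D) (α β : CArgument F P) : Prop :=
  fc.asmSetEq α.asm β.asm ∧ fc.atomEq α.claim β.claim

/-- Equality of sets of ground constrained arguments modulo ground constraints. -/
def SetEqModGC (fc : CABA F P D) (S T : Set (CArgument F P)) : Prop :=
  (∀ x ∈ S, ∃ y ∈ T, EqModGC fc x y) ∧ (∀ y ∈ T, ∃ x ∈ S, EqModGC fc x y)

/-- The equivalence relation `≡` on sets of constrained arguments: the smallest
equivalence relation identifying ground arguments equal modulo ground constraints,
identifying `{α}` with `GrCInst α`, and a congruence for union. -/
inductive AEquiv (fc : CABA F P D) : Set (CArgument F P) → Set (CArgument F P) → Prop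
  | refl (Γ : Set (CArgument F P)) : AEquiv fc Γ Γ
  | symm {Γ Δ : Set (CArgument F P)} : AEquiv fc Γ Δ → AEquiv fc Δ Γ
  | trans {Γ Δ Θ : Set (CArgument F P)} : AEquiv fc Γ Δ → AEquiv fc Δ Θ → AEquiv fc Γ Θ
  | groundEq {α β : CArgument F P} (hα : α ∈ CArg fc) (hβ : β ∈ CArg fc)
      (gα : α.Ground) (gβ : β.Ground) (h : EqModGC fc α β) : AEquiv fc {α} {β}
  | grInst {α : CArgument F P} (hα : α ∈ CArg fc) : AEquiv fc {α} (GrCInst fc α)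
  | unionCongr (Γ : Set (CArgument F P)) {Δ₁ Δ₂ : Set (CArgument F P)} :
      AEquiv fc Δ₁ Δ₂ → AEquiv fc (Γ ∪ Δ₁) (Γ ∪ Δ₂)

/-- `α` fully attacks `β` (Definition of full attack, including the case where the
claim of `α` and the attacked assumption of `β` have different argument tuples,
handled via fresh linking variables). -/
def FullAttacks (fc : CABA F P D) (α β : CArgument F P) : Prop :=
  ∃ a ∈ β.asm, α.claim.pred = fc.contrPred a.pred ∧
    ((α.claim.args = a.args ∧
        ∀ σ : ℕ → D, (∀ d ∈ β.con, fc.Holds σ d) →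
          ∃ σ' : ℕ → D, Agree σ' σ α.claim.vars ∧ ∀ c ∈ α.con, fc.Holds σ' c) ∨
      (α.claim.args ≠ a.args ∧
        ∀ σ : ℕ → D, (∀ d ∈ β.con, fc.Holds σ d) →
          ∃ σ' : ℕ → D,
            List.Forall₂ (fun t u => Term.evalT fc.funI σ' t = Term.evalT fc.funI σ u)
              α.claim.args a.args ∧
            ∀ c ∈ α.con, fc.Holds σ' c))

/-- `α` partially attacks `β`. -/
def PartialAttacks (fc : CABA F P D) (α β : CArgument F P) : Prop :=
  ∃ a ∈ β.asm, α.claim.pred = fc.contrPred a.pred ∧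
    ((α.claim.args = a.args ∧
        ∃ σ₁ σ₂ : ℕ → D, Agree σ₁ σ₂ α.claim.vars ∧
          (∀ c ∈ α.con, fc.Holds σ₁ c) ∧ ∀ d ∈ β.con, fc.Holds σ₂ d) ∨
      (α.claim.args ≠ a.args ∧
        ∃ σ₁ σ₂ : ℕ → D,
          List.Forall₂ (fun t u => Term.evalT fc.funI σ₁ t = Term.evalT fc.funI σ₂ u)
            α.claim.args a.args ∧
          (∀ c ∈ α.con, fc.Holds σ₁ c) ∧ ∀ d ∈ β.con, fc.Holds σ₂ d))

/-- Attack between ground constrained arguments, viewed as arguments of `Ground(F_c)`. -/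
def GAttacks (fc : CABA F P D) (α β : CArgument F P) : Prop :=
  ∃ a ∈ β.asm, α.claim = fc.contrary a

/-- `Γ ⊆ CArg` is a conflict-free extension of `F_c`:
`GrCInst(Γ)` is conflict-free in `Ground(F_c)`. -/
def ConflictFreeExt (fc : CABA F P D) (Γ : Set (CArgument F P)) : Prop :=
  ∀ α ∈ GrCInstSet fc Γ, ∀ β ∈ GrCInstSet fc Γ, ¬ GAttacks fc α β

/-- `Γ ⊆ CArg` is an admissible extension of `F_c`. -/
def AdmissibleExt (fc : CABA F P D) (Γ : Set (CArgument F P)) : Prop :=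
  ConflictFreeExt fc Γ ∧
    ∀ α ∈ GrCInstSet fc Γ, ∀ β ∈ GrCInstSet fc (CArg fc),
      GAttacks fc β α → ∃ γ ∈ GrCInstSet fc Γ, GAttacks fc γ β

/-- `Γ ⊆ CArg` is a stable extension of `F_c`. -/
def StableExt (fc : CABA F P D) (Γ : Set (CArgument F P)) : Prop :=
  ConflictFreeExt fc Γ ∧
    ∀ β ∈ GrCInstSet fc (CArg fc), β ∉ GrCInstSet fc Γ →
      ∃ α ∈ GrCInstSet fc Γ, GAttacks fc α β

/-- Non-ground conflict-freeness. -/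
def NGCF (fc : CABA F P D) (S : Set (CArgument F P)) : Prop :=
  ¬ ∃ α ∈ S, ∃ β ∈ S, PartialAttacks fc α β

/-- The set of constrained arguments fully attacked by some member of `S`. -/
def FAtt (fc : CABA F P D) (S : Set (CArgument F P)) : Set (CArgument F P) :=
  {β | β ∈ CArg fc ∧ ∃ α ∈ S, FullAttacks fc α β}

/-- A set of constrained arguments is non-overlapping: partial and full attacks coincide. -/
def NonOverlapping (fc : CABA F P D) (Δ : Set (CArgument F P)) : Prop :=
  ∀ α ∈ Δ, ∀ β ∈ Δ, (PartialAttacks fc α β ↔ FullAttacks fc α β)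

/-- Two constrained arguments have common constrained instances. -/
def CommonCI (fc : CABA F P D) (α β : CArgument F P) : Prop :=
  ∃ α' ∈ GrCInst fc α, ∃ β' ∈ GrCInst fc β, EqModGC fc α' β'

/-- A set of constrained arguments is instance-disjoint. -/
def InstanceDisjoint (fc : CABA F P D) (Δ : Set (CArgument F P)) : Prop :=
  ∀ α ∈ Δ, ∀ β ∈ Δ, α ≠ β → ¬ CommonCI fc α β

/-- The set of equality constraints `{X = t}` linking variables `xs` to terms `ts`. -/
def eqAtoms (fc : CABA F P D) (xs : List ℕ) (ts : List (Term F)) : Set (Atom F P) :=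
  {a | ∃ pr ∈ (xs.map Term.var).zip ts, a = Atom.mk fc.eqP [pr.1, pr.2]}

end Args

/-- A rule of a generic (ground) language. -/
structure GRule (S : Type) : Type where
  head : S
  body : List S

/-- A 4-tuple `⟨L, ℛ, 𝒜, ⎯⟩` as candidate ABA framework. -/
structure ABAF (S : Type) : Type where
  lang : Set S
  rules : Set (GRule S)
  asm : Set S
  contrary : S → S

/-- The 4-tuple is an ABA framework: rules are over the language, the assumptions are a
non-empty subset of the language, and the contrary map is total from assumptions into
the language. -/
def ABAF.IsABA {S : Type} (fr : ABAF S) : Prop :=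
  (∀ r ∈ fr.rules, r.head ∈ fr.lang ∧ ∀ b ∈ r.body, b ∈ fr.lang) ∧
    fr.asm ⊆ fr.lang ∧ fr.asm.Nonempty ∧ ∀ a ∈ fr.asm, fr.contrary a ∈ fr.lang

def Rule.toGRule {F P : Type} (r : Rule F P) : GRule (Atom F P) := ⟨r.head, r.body⟩

/-- The grounding `Ground(F_c)` of a CABA framework. -/
def groundABA {F P D : Type} (fc : CABA F P D) : ABAF (Atom F P) where
  lang := {a | a ∈ fc.Lc ∧ a.Ground}
  rules := {gr | (∃ r ∈ fc.Rules, ∃ ϑ : ℕ → Term F, gr = (r.subst ϑ).toGRule ∧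
        (r.subst ϑ).head.Ground ∧ ∀ b ∈ (r.subst ϑ).body, b.Ground) ∨
      (∃ c, c ∈ fc.Con ∧ c.Ground ∧ fc.Valid c ∧ gr = ⟨c, []⟩)}
  asm := {a | a ∈ fc.Asm ∧ a.Ground}
  contrary := fc.contrary

/-- An argument `A ⊢_R s` in a (flat) ABA framework: a finite tree with root the claim,
whose non-leaf nodes have as children the body of exactly one rule of `R` with matching
head, and whose leaves are assumptions in `A` or `true`. -/
inductive ABADeriv {S : Type} (fr : ABAF S) : Set S → Set (GRule S) → S → Prop
  | asm {a : S} (ha : a ∈ fr.asm) : ABADeriv fr {a} ∅ a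
  | node {r : GRule S} {AS : ℕ → Set S} {RS : ℕ → Set (GRule S)}
      (hr : r ∈ fr.rules)
      (hasm : ∀ i (hi : i < r.body.length), r.body.get ⟨i, hi⟩ ∈ fr.asm →
        AS i = {r.body.get ⟨i, hi⟩} ∧ RS i = ∅)
      (hder : ∀ i (hi : i < r.body.length), r.body.get ⟨i, hi⟩ ∉ fr.asm →
        ABADeriv fr (AS i) (RS i) (r.body.get ⟨i, hi⟩)) :
      ABADeriv fr (⋃ i ∈ Finset.range r.body.length, AS i)
        ({r} ∪ ⋃ i ∈ Finset.range r.body.length, RS i) r.head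

section Split

variable {F P D : Type}

/-- Two sets of constraints are mutually exclusive: `CT ⊨ ¬∃(e₁ ∧ e₂)`. -/
def MutuallyExclusive (fc : CABA F P D) (E₁ E₂ : Set (Atom F P)) : Prop :=
  ¬ ∃ σ : ℕ → D, (∀ e ∈ E₁, fc.Holds σ e) ∧ ∀ e ∈ E₂, fc.Holds σ e

/-- `Es` is a constraint split `cs(C,D)` of the sets `C` and `D` of constraints. -/
def IsConstraintSplit (fc : CABA F P D) (C Dc : Set (Atom F P))
    (Es : List (Set (Atom F P))) : Prop :=
  (∀ E ∈ Es, E ⊆ fc.Con ∧ E.Finite) ∧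
  (∀ σ : ℕ → D,
    ((¬ ∃ σ' : ℕ → D, Agree σ' σ (setVars C ∩ setVars Dc) ∧ ∀ c ∈ C, fc.Holds σ' c) ∧
        ∀ d ∈ Dc, fc.Holds σ d) ↔
      ∃ E ∈ Es, ∀ e ∈ E, fc.Holds σ e) ∧
  (∀ E ∈ Es, fc.ConsistentSet E) ∧
  Es.Pairwise (MutuallyExclusive fc)

/-- `CT` is closed under negation. -/
def ClosedUnderNeg (fc : CABA F P D) : Prop :=
  ∀ c ∈ fc.Con, ∃ ds : List (Atom F P), (∀ d ∈ ds, d ∈ fc.Con) ∧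
    (∀ σ : ℕ → D, (¬ fc.Holds σ c) ↔ ∃ d ∈ ds, fc.Holds σ d) ∧
    ds.Pairwise (fun d₁ d₂ => ¬ ∃ σ : ℕ → D, fc.Holds σ d₁ ∧ fc.Holds σ d₂)

/-- `CT` is closed under existential quantification. -/
def ClosedUnderEx (fc : CABA F P D) : Prop :=
  ∀ C : Set (Atom F P), C ⊆ fc.Con → C.Finite → ∀ V : Set ℕ,
    ∃ Es : List (Set (Atom F P)), (∀ E ∈ Es, E ⊆ fc.Con ∧ E.Finite) ∧
      ∀ σ : ℕ → D, (∃ σ' : ℕ → D, Agree σ' σ V ∧ ∀ c ∈ C, fc.Holds σ' c) ↔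
        ∃ E ∈ Es, ∀ e ∈ E, fc.Holds σ e

/-- `Bs` is an output of the splitting operation `split_ci(α,β)`. -/
def IsSplitCI (fc : CABA F P D) (α β : CArgument F P) (Bs : List (CArgument F P)) : Prop :=
  ∃ (C A : Set (Atom F P)) (R R' : Set (Rule F P)) (s : Atom F P)
      (Dc : Set (Atom F P)) (Es : List (Set (Atom F P))),
    C.Finite ∧ Dc.Finite ∧ C ⊆ fc.Con ∧ Dc ⊆ fc.Con ∧
    AEquiv fc {α} {CArgument.mk C A R s} ∧ AEquiv fc {β} {CArgument.mk Dc A R' s} ∧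
    setVars C ∩ setVars Dc ⊆ setVars A ∪ s.vars ∧
    fc.ConsistentSet (C ∪ Dc) ∧
    IsConstraintSplit fc C Dc Es ∧
    Bs = Es.map fun E => CArgument.mk E A R' s

/-- `Bs` is an output of the splitting operation `split_pa(α,β)`. -/
def IsSplitPA (fc : CABA F P D) (α β : CArgument F P) (Bs : List (CArgument F P)) : Prop :=
  ∃ (C A₁ A₂ : Set (Atom F P)) (R₁ R₂ : Set (Rule F P)) (s₁ s₂ a : Atom F P)
      (Dc : Set (Atom F P)) (Es : List (Set (Atom F P))),
    C.Finite ∧ Dc.Finite ∧ C ⊆ fc.Con ∧ Dc ⊆ fc.Con ∧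
    AEquiv fc {α} {CArgument.mk C A₁ R₁ s₁} ∧ AEquiv fc {β} {CArgument.mk Dc A₂ R₂ s₂} ∧
    a ∈ A₂ ∧ s₁ = fc.contrary a ∧
    setVars C ∩ setVars Dc ⊆ s₁.vars ∧
    fc.ConsistentSet (C ∪ Dc) ∧
    IsConstraintSplit fc C Dc Es ∧
    Bs = CArgument.mk (C ∪ Dc) A₂ R₂ s₂ :: (Es.map fun E => CArgument.mk E A₂ R₂ s₂)

/-- One step of the Argument Splitting procedure. -/
inductive SplitStep (fc : CABA F P D) :
    Set (CArgument F P) → Set (CArgument F P) → Prop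
  | ci {Δ : Set (CArgument F P)} {α β : CArgument F P} {Bs : List (CArgument F P)}
      (hα : α ∈ Δ) (hβ : β ∈ Δ) (h : CommonCI fc α β) (hs : IsSplitCI fc α β Bs) :
      SplitStep fc Δ ((Δ \ {β}) ∪ {b | b ∈ Bs})
  | pa {Δ : Set (CArgument F P)} {α β : CArgument F P} {Bs : List (CArgument F P)}
      (hα : α ∈ Δ) (hβ : β ∈ Δ) (hp : PartialAttacks fc α β) (hf : ¬ FullAttacks fc α β)
      (hs : IsSplitPA fc α β Bs) :
      SplitStep fc Δ ((Δ \ {β}) ∪ {b | b ∈ Bs})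

end Split

end CABAFormal


section ConstraintSplitAux

open CABAFormal

variable {F P D : Type} (fc : CABA F P D)

/-- All atoms of a set hold under an assignment. -/
def HAll (σ : ℕ → D) (E : Set (Atom F P)) : Prop := ∀ e ∈ E, fc.Holds σ e

lemma hall_union {σ : ℕ → D} {A B : Set (Atom F P)} :
    HAll fc σ (A ∪ B) ↔ HAll fc σ A ∧ HAll fc σ B := by
  constructor
  · intro h; exact ⟨fun e he => h e (Or.inl he), fun e he => h e (Or.inr he)⟩
  · rintro ⟨h1, h2⟩ e (he | he)
    exacts [h1 e he, h2 e he]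

lemma hall_insert {σ : ℕ → D} {c : Atom F P} {E : Set (Atom F P)} :
    HAll fc σ (insert c E) ↔ fc.Holds σ c ∧ HAll fc σ E := by
  constructor
  · intro h; exact ⟨h c (Set.mem_insert _ _), fun e he => h e (Set.mem_insert_of_mem _ he)⟩
  · rintro ⟨h1, h2⟩ e he
    rcases Set.mem_insert_iff.mp he with rfl | he
    exacts [h1, h2 e he]

lemma ME_mono {E₁ E₂ E₁' E₂' : Set (Atom F P)} (h : MutuallyExclusive fc E₁ E₂)
    (s1 : E₁ ⊆ E₁') (s2 : E₂ ⊆ E₂') : MutuallyExclusive fc E₁' E₂' := by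
  rintro ⟨σ, h1, h2⟩
  exact h ⟨σ, fun e he => h1 e (s1 he), fun e he => h2 e (s2 he)⟩

/-- Negation of a finite conjunction of constraints as a disjoint disjunction of
finite conjunctions of constraints. -/
lemma neg_dnf (hneg : ClosedUnderNeg fc) (l : List (Atom F P))
    (hl : ∀ c ∈ l, c ∈ fc.Con) :
    ∃ Gs : List (Set (Atom F P)),
      (∀ G ∈ Gs, G ⊆ fc.Con ∧ G.Finite) ∧
      (∀ σ : ℕ → D, (¬ ∀ c ∈ l, fc.Holds σ c) ↔ ∃ G ∈ Gs, HAll fc σ G) ∧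
      Gs.Pairwise (MutuallyExclusive fc) := by
  induction l with
  | nil => exact ⟨[], by simp, by simp, by simp⟩
  | cons c l ih =>
    obtain ⟨ds, hds1, hds2, hds3⟩ := hneg c (hl c (List.mem_cons_self))
    obtain ⟨Gs, hG1, hG2, hG3⟩ := ih (fun x hx => hl x (List.mem_cons_of_mem _ hx))
    refine ⟨ds.map (fun d => ({d} : Set (Atom F P))) ++ Gs.map (insert c), ?_, ?_, ?_⟩
    · intro G hG
      rcases List.mem_append.mp hG with hG | hG
      · obtain ⟨d, hd, rfl⟩ := List.mem_map.mp hG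
        exact ⟨by simpa using hds1 d hd, Set.finite_singleton d⟩
      · obtain ⟨G', hG', rfl⟩ := List.mem_map.mp hG
        exact ⟨Set.insert_subset (hl c (List.mem_cons_self)) (hG1 G' hG').1,
          ((hG1 G' hG').2).insert c⟩
    · intro σ
      constructor
      · intro hne
        by_cases hc : fc.Holds σ c
        · have hnl : ¬ ∀ x ∈ l, fc.Holds σ x := by
            intro hx
            exact hne (by
              intro x hx'
              rcases List.mem_cons.mp hx' with rfl | hx'
              exacts [hc, hx x hx'])
          obtain ⟨G, hGmem, hGall⟩ := (hG2 σ).mp hnl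
          refine ⟨insert c G, List.mem_append.mpr (Or.inr (List.mem_map.mpr ⟨G, hGmem, rfl⟩)),
            (hall_insert fc).mpr ⟨hc, hGall⟩⟩
        · obtain ⟨d, hd, hdh⟩ := (hds2 σ).mp hc
          refine ⟨{d}, List.mem_append.mpr (Or.inl (List.mem_map.mpr ⟨d, hd, rfl⟩)), ?_⟩
          intro e he
          rcases Set.mem_singleton_iff.mp he with rfl
          exact hdh
      · rintro ⟨G, hGmem, hGall⟩ hall
        have hc : fc.Holds σ c := hall c (List.mem_cons_self)
        rcases List.mem_append.mp hGmem with hG | hG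
        · obtain ⟨d, hd, rfl⟩ := List.mem_map.mp hG
          exact (hds2 σ).mpr ⟨d, hd, hGall d rfl⟩ hc
        · obtain ⟨G', hG', rfl⟩ := List.mem_map.mp hG
          exact (hG2 σ).mpr ⟨G', hG', ((hall_insert fc).mp hGall).2⟩
            (fun x hx => hall x (List.mem_cons_of_mem _ hx))
    · rw [List.pairwise_append]
      refine ⟨?_, ?_, ?_⟩
      · refine hds3.map _ ?_
        intro d₁ d₂ hd
        rintro ⟨σ, h1, h2⟩
        exact hd ⟨σ, h1 d₁ rfl, h2 d₂ rfl⟩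
      · refine hG3.map _ ?_
        intro G₁ G₂ hG
        exact ME_mono fc hG (Set.subset_insert _ _) (Set.subset_insert _ _)
      · intro x hx y hy
        obtain ⟨d, hd, rfl⟩ := List.mem_map.mp hx
        obtain ⟨G', hG', rfl⟩ := List.mem_map.mp hy
        rintro ⟨σ, h1, h2⟩
        exact (hds2 σ).mpr ⟨d, hd, h1 d rfl⟩ (h2 c (Set.mem_insert _ _))

/-- Negations of all members of a list of finite constraint sets, each as a
disjoint DNF. -/
lemma negs (hneg : ClosedUnderNeg fc) (Es₀ : List (Set (Atom F P)))
    (h : ∀ E ∈ Es₀, E ⊆ fc.Con ∧ E.Finite) :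
    ∃ Gss : List (List (Set (Atom F P))),
      (∀ Gs ∈ Gss, (∀ G ∈ Gs, G ⊆ fc.Con ∧ G.Finite) ∧
        Gs.Pairwise (MutuallyExclusive fc)) ∧
      ∀ σ : ℕ → D, (∀ E ∈ Es₀, ¬ HAll fc σ E) ↔ ∀ Gs ∈ Gss, ∃ G ∈ Gs, HAll fc σ G := by
  induction Es₀ with
  | nil => exact ⟨[], by simp, by simp⟩
  | cons E Es ih =>
    obtain ⟨hEc, hEf⟩ := h E (List.mem_cons_self)
    obtain ⟨Gss, g1, g2⟩ := ih (fun x hx => h x (List.mem_cons_of_mem _ hx))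
    have hl : ∀ c ∈ hEf.toFinset.toList, c ∈ fc.Con := by
      intro c hc
      exact hEc (by rwa [Finset.mem_toList, Set.Finite.mem_toFinset] at hc)
    obtain ⟨Gs, q1, q2, q3⟩ := neg_dnf fc hneg hEf.toFinset.toList hl
    have hiff : ∀ σ : ℕ → D, HAll fc σ E ↔ ∀ c ∈ hEf.toFinset.toList, fc.Holds σ c := by
      intro σ
      constructor <;> intro hh c hc
      · exact hh c (by rwa [Finset.mem_toList, Set.Finite.mem_toFinset] at hc)
      · exact hh c (by rwa [Finset.mem_toList, Set.Finite.mem_toFinset])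
    refine ⟨Gs :: Gss, ?_, ?_⟩
    · intro x hx
      rcases List.mem_cons.mp hx with rfl | hx
      exacts [⟨q1, q3⟩, g1 x hx]
    · intro σ
      rw [List.forall_mem_cons, List.forall_mem_cons, ← g2 σ]
      exact and_congr ((not_congr (hiff σ)).trans (q2 σ)) Iff.rfl

/-- Product of a disjoint DNF with a disjoint DNF. -/
lemma prod_one (Gs Hs : List (Set (Atom F P)))
    (pG : Gs.Pairwise (MutuallyExclusive fc)) (pH : Hs.Pairwise (MutuallyExclusive fc)) :
    ∃ Ks : List (Set (Atom F P)),
      (∀ K ∈ Ks, ∃ G ∈ Gs, ∃ H ∈ Hs, K = G ∪ H) ∧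
      (∀ σ : ℕ → D, ((∃ G ∈ Gs, HAll fc σ G) ∧ ∃ H ∈ Hs, HAll fc σ H) ↔
        ∃ K ∈ Ks, HAll fc σ K) ∧
      Ks.Pairwise (MutuallyExclusive fc) := by
  induction Gs with
  | nil => exact ⟨[], by simp, by simp, by simp⟩
  | cons G Gs ih =>
    obtain ⟨Ks, k1, k2, k3⟩ := ih pG.of_cons
    have hGme : ∀ G' ∈ Gs, MutuallyExclusive fc G G' := (List.pairwise_cons.mp pG).1
    refine ⟨Hs.map (fun H => G ∪ H) ++ Ks, ?_, ?_, ?_⟩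
    · intro K hK
      rcases List.mem_append.mp hK with hK | hK
      · obtain ⟨H, hH, rfl⟩ := List.mem_map.mp hK
        exact ⟨G, List.mem_cons_self, H, hH, rfl⟩
      · obtain ⟨G', hG', H, hH, rfl⟩ := k1 K hK
        exact ⟨G', List.mem_cons_of_mem _ hG', H, hH, rfl⟩
    · intro σ
      constructor
      · rintro ⟨⟨G', hG', hallG⟩, H, hH, hallH⟩
        rcases List.mem_cons.mp hG' with rfl | hG'
        · exact ⟨G' ∪ H, List.mem_append.mpr (Or.inl (List.mem_map.mpr ⟨H, hH, rfl⟩)),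
            (hall_union fc).mpr ⟨hallG, hallH⟩⟩
        · obtain ⟨K, hK, hallK⟩ := (k2 σ).mp ⟨⟨G', hG', hallG⟩, H, hH, hallH⟩
          exact ⟨K, List.mem_append.mpr (Or.inr hK), hallK⟩
      · rintro ⟨K, hK, hallK⟩
        rcases List.mem_append.mp hK with hK | hK
        · obtain ⟨H, hH, rfl⟩ := List.mem_map.mp hK
          obtain ⟨h1, h2⟩ := (hall_union fc).mp hallK
          exact ⟨⟨G, List.mem_cons_self, h1⟩, H, hH, h2⟩
        · obtain ⟨⟨G', hG', hallG⟩, H, hH, hallH⟩ := (k2 σ).mpr ⟨K, hK, hallK⟩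
          exact ⟨⟨G', List.mem_cons_of_mem _ hG', hallG⟩, H, hH, hallH⟩
    · rw [List.pairwise_append]
      refine ⟨?_, k3, ?_⟩
      · refine pH.map _ ?_
        intro H₁ H₂ hH
        exact ME_mono fc hH Set.subset_union_right Set.subset_union_right
      · intro x hx y hy
        obtain ⟨H, hH, rfl⟩ := List.mem_map.mp hx
        obtain ⟨G', hG', H', hH', rfl⟩ := k1 y hy
        exact ME_mono fc (hGme G' hG') Set.subset_union_left Set.subset_union_left

/-- Product of a list of disjoint DNFs is a disjoint DNF. -/
lemma prod_all (Gss : List (List (Set (Atom F P))))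
    (h : ∀ Gs ∈ Gss, (∀ G ∈ Gs, G ⊆ fc.Con ∧ G.Finite) ∧
      Gs.Pairwise (MutuallyExclusive fc)) :
    ∃ Hs : List (Set (Atom F P)),
      (∀ H ∈ Hs, H ⊆ fc.Con ∧ H.Finite) ∧
      (∀ σ : ℕ → D, (∀ Gs ∈ Gss, ∃ G ∈ Gs, HAll fc σ G) ↔ ∃ H ∈ Hs, HAll fc σ H) ∧
      Hs.Pairwise (MutuallyExclusive fc) := by
  induction Gss with
  | nil =>
    refine ⟨[∅], ?_, ?_, by simp⟩
    · intro H hH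
      rcases List.mem_singleton.mp hH with rfl
      exact ⟨Set.empty_subset _, Set.finite_empty⟩
    · intro σ
      simp [HAll]
  | cons Gs Gss ih =>
    obtain ⟨hGs, pGs⟩ := h Gs (List.mem_cons_self)
    obtain ⟨Hs, i1, i2, i3⟩ := ih (fun x hx => h x (List.mem_cons_of_mem _ hx))
    obtain ⟨Ks, k1, k2, k3⟩ := prod_one fc Gs Hs pGs i3
    refine ⟨Ks, ?_, ?_, k3⟩
    · intro K hK
      obtain ⟨G, hG, H, hH, rfl⟩ := k1 K hK
      exact ⟨Set.union_subset (hGs G hG).1 (i1 H hH).1, ((hGs G hG).2).union (i1 H hH).2⟩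
    · intro σ
      rw [List.forall_mem_cons, ← k2 σ, ← i2 σ]

end ConstraintSplitAux

open CABAFormal in
/-- If `CT` is closed under negation and existential quantification, then for all
finite sets `C, D ⊆ 𝒞` of constraints with `C ∪ D` consistent, a constraint split
`cs(C,D)` exists. -/
theorem constraint_split_exists {F P D : Type} (fc : CABA F P D)
    (hneg : ClosedUnderNeg fc) (hex : ClosedUnderEx fc)
    (C Dc : Set (Atom F P)) (hC : C ⊆ fc.Con) (hD : Dc ⊆ fc.Con)
    (hCf : C.Finite) (hDf : Dc.Finite) (hcons : fc.ConsistentSet (C ∪ Dc)) :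
    ∃ Es : List (Set (Atom F P)), IsConstraintSplit fc C Dc Es := by
  classical
  obtain ⟨Es₀, hE1, hE2⟩ := hex C hC hCf (setVars C ∩ setVars Dc)
  obtain ⟨Gss, hGss1, hGss2⟩ := negs fc hneg Es₀ hE1
  obtain ⟨Hs, h1, h2, h3⟩ := prod_all fc Gss hGss1
  refine ⟨(Hs.map (fun H => H ∪ Dc)).filter (fun E => decide (fc.ConsistentSet E)),
    ?_, ?_, ?_, ?_⟩
  · intro E hE
    obtain ⟨H, hH, rfl⟩ := List.mem_map.mp (List.mem_of_mem_filter hE)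
    exact ⟨Set.union_subset (h1 H hH).1 hD, ((h1 H hH).2).union hDf⟩
  · intro σ
    have key : (¬ ∃ σ' : ℕ → D, Agree σ' σ (setVars C ∩ setVars Dc) ∧
        ∀ c ∈ C, fc.Holds σ' c) ↔ ∃ H ∈ Hs, HAll fc σ H := by
      rw [hE2 σ]
      simp only [not_exists, not_and]
      exact (hGss2 σ).trans (h2 σ)
    constructor
    · rintro ⟨hne, hDc⟩
      obtain ⟨H, hH, hallH⟩ := key.mp hne
      refine ⟨H ∪ Dc, ?_, ?_⟩
      · rw [List.mem_filter]
        refine ⟨List.mem_map.mpr ⟨H, hH, rfl⟩, ?_⟩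
        rw [decide_eq_true_iff]
        exact ⟨σ, fun e he => ((hall_union fc).mpr ⟨hallH, hDc⟩) e he⟩
      · exact fun e he => ((hall_union fc).mpr ⟨hallH, hDc⟩) e he
    · rintro ⟨E, hE, hallE⟩
      obtain ⟨H, hH, rfl⟩ := List.mem_map.mp (List.mem_of_mem_filter hE)
      have := (hall_union fc).mp hallE
      exact ⟨key.mpr ⟨H, hH, this.1⟩, this.2⟩
  · intro E hE
    have := (List.mem_filter.mp hE).2
    rw [decide_eq_true_iff] at this
    exact this
  · refine List.Pairwise.sublist List.filter_sublist ?_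
    refine h3.map _ ?_
    intro H₁ H₂ hH
    exact ME_mono fc hH Set.subset_union_left Set.subset_union_left
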